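/- Let C be the n×n tridiagonal continuant matrix with diagonal a_1,...,a_n and 1's on the off-diagonals, and let F be the n×n matrix with 1 in both the top-right and bottom-left corners and 0 elsewhere. Then the determinant of the 2n×2n block matrix [[F, C],[C, F]] equals (−1)^n · (R_n(a_1,...,a_n)² − 4). -/

import Mathlib

open Matrix

variable {R : Type*} [CommRing R]

/-- The n×n tridiagonal "continuant" matrix with diagonal entries `a 1, ..., a n`
and 1's on the sub- and superdiagonals. -/
def triMat (n : ℕ) (a : ℕ → R) : Matrix (Fin n) (Fin n) R :=
  fun i j =>
    if (i : ℕ) = (j : ℕ) then a (i + 1)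
    else if (i : ℕ) + 1 = (j : ℕ) ∨ (j : ℕ) + 1 = (i : ℕ) then 1 else 0

/-- The continuant `K_n(a_1, ..., a_n)`, as a tridiagonal determinant. -/
def cont (n : ℕ) (a : ℕ → R) : R := (triMat n a).det

/-- The continuant with shifted index: `contE m = K_{m-1}`, so `contE 0 = K_{-1} = 0`. -/
def contE : ℕ → (ℕ → R) → R
  | 0, _ => 0
  | n + 1, a => cont n a

/-- The rotundus `R_n(a_1,...,a_n) = K_n(a_1,...,a_n) - K_{n-2}(a_2,...,a_{n-1})`,
with the conventions `K_{-1} = 0`, `K_0 = 1` (so `R_0 = 1 - (-?) `... for `n ≥ 1` it is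
`K_n - K_{n-2}`; `R_0 = 2`). -/
def rotundus : ℕ → (ℕ → R) → R
  | 0, _ => 2
  | 1, a => a 1
  | n + 2, a => cont (n + 2) a - cont n (fun i => a (i + 1))

/-- The 2×2 matrix `[[x, 1], [-1, 0]]`. -/
def slMat (x : R) : Matrix (Fin 2) (Fin 2) R := !![x, 1; -1, 0]

/-- The product `[[a_1,1],[-1,0]] ⋯ [[a_n,1],[-1,0]]`. -/
def slProd (n : ℕ) (a : ℕ → R) : Matrix (Fin 2) (Fin 2) R :=
  ((List.range n).map (fun i => slMat (a (i + 1)))).prod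

/-- The n×n matrix with 1 in both the top-right and bottom-left corners. -/
def cornerF (n : ℕ) : Matrix (Fin n) (Fin n) R :=
  fun i j =>
    if ((i : ℕ) = 0 ∧ (j : ℕ) = n - 1) ∨ ((i : ℕ) = n - 1 ∧ (j : ℕ) = 0) then 1 else 0

lemma det_fromBlocks_comm {n : Type*} [DecidableEq n] [Fintype n]
    (A B : Matrix n n R) :
    (fromBlocks A B B A).det = (A + B).det * (A - B).det := by
  have h : (fromBlocks (1 : Matrix n n R) 1 0 1) * (fromBlocks A B B A) *
      (fromBlocks (1 : Matrix n n R) (-1) 0 1) =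
      fromBlocks (A + B) 0 B (A - B) := by
    rw [fromBlocks_multiply, fromBlocks_multiply]
    ext i j <;> rcases i with i | i <;> rcases j with j | j <;>
      simp [Matrix.mul_neg, fromBlocks, Matrix.add_apply, Matrix.neg_apply, Matrix.sub_apply] <;> ring
  have hdet := congrArg Matrix.det h
  rw [Matrix.det_mul, Matrix.det_mul, Matrix.det_fromBlocks_zero₂₁,
    Matrix.det_fromBlocks_zero₂₁, Matrix.det_fromBlocks_zero₁₂] at hdet
  simpa using hdet

lemma detE2 (m : ℕ) (a : ℕ → R) :
    ((triMat (m+2) a).updateRow 0 (Pi.single (Fin.last (m+1)) 1)).det = (-1)^(m+1) := by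
  rw [Matrix.det_succ_row_zero]
  rw [Finset.sum_eq_single (Fin.last (m+1))]
  · rw [Matrix.updateRow_self, Pi.single_eq_same, Fin.succAbove_last]
    have hdet : (((triMat (m+2) a).updateRow 0 (Pi.single (Fin.last (m+1)) 1)).submatrix
        Fin.succ Fin.castSucc).det = 1 := by
      have hent : ∀ i j : Fin (m+1),
          (((triMat (m+2) a).updateRow 0 (Pi.single (Fin.last (m+1)) 1)).submatrix
            Fin.succ Fin.castSucc) i j = triMat (m+2) a i.succ j.castSucc := by
        intro i j
        rw [Matrix.submatrix_apply]
        exact congrFun (Matrix.updateRow_ne (Fin.succ_ne_zero i)) _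
      rw [Matrix.det_of_upperTriangular]
      · rw [Finset.prod_eq_one]
        intro i _
        rw [hent]
        simp only [triMat, Fin.val_succ, Fin.coe_castSucc]
        split_ifs with h1 h2
        · exact absurd h1 (by omega)
        · rfl
        · exact absurd (Or.inr trivial) h2
      · intro i j hij
        have hji : (j : ℕ) < i := hij
        rw [hent]
        simp only [triMat, Fin.val_succ, Fin.coe_castSucc]
        split_ifs with h1 h2
        · exact absurd h1 (by omega)
        · exact absurd h2 (by omega)
        · rfl
    rw [hdet]
    simp
  · intro b _ hb
    rw [Matrix.updateRow_self, Pi.single_eq_of_ne hb]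
    ring
  · simp

lemma detE3 (m : ℕ) (a : ℕ → R) :
    ((triMat (m+2) a).updateRow (Fin.last (m+1)) (Pi.single 0 1)).det = (-1)^(m+1) := by
  rw [Matrix.det_succ_row _ (Fin.last (m+1))]
  rw [Finset.sum_eq_single 0]
  · rw [Matrix.updateRow_self, Pi.single_eq_same, Fin.succAbove_last, Fin.succAbove_zero]
    have hdet : (((triMat (m+2) a).updateRow (Fin.last (m+1)) (Pi.single 0 1)).submatrix
        Fin.castSucc Fin.succ).det = 1 := by
      have hent : ∀ i j : Fin (m+1),
          (((triMat (m+2) a).updateRow (Fin.last (m+1)) (Pi.single 0 1)).submatrix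
            Fin.castSucc Fin.succ) i j = triMat (m+2) a i.castSucc j.succ := by
        intro i j
        rw [Matrix.submatrix_apply]
        exact congrFun (Matrix.updateRow_ne (Fin.castSucc_lt_last i).ne) _
      rw [Matrix.det_of_lowerTriangular]
      · rw [Finset.prod_eq_one]
        intro i _
        rw [hent]
        simp only [triMat, Fin.val_succ, Fin.coe_castSucc]
        split_ifs with h1 h2
        · exact absurd h1 (by omega)
        · rfl
        · exact absurd (Or.inl trivial) h2
      · intro i j hij
        have hij' : (i : ℕ) < j := hij
        rw [hent]
        simp only [triMat, Fin.val_succ, Fin.coe_castSucc]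
        split_ifs with h1 h2
        · exact absurd h1 (by omega)
        · exact absurd h2 (by omega)
        · rfl
    rw [hdet]
    simp
  · intro b _ hb
    rw [Matrix.updateRow_self, Pi.single_eq_of_ne hb]
    ring
  · simp

lemma detE4 (m : ℕ) (a : ℕ → R) :
    (((triMat (m+2) a).updateRow 0 (Pi.single (Fin.last (m+1)) 1)).updateRow
      (Fin.last (m+1)) (Pi.single 0 1)).det = - cont m (fun i => a (i+1)) := by
  set D := ((triMat (m+2) a).updateRow 0 (Pi.single (Fin.last (m+1)) 1)).updateRow
      (Fin.last (m+1)) (Pi.single 0 1) with hD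
  have h0L : (0 : Fin (m+2)) ≠ Fin.last (m+1) := by
    simp [Fin.ext_iff]
  have hrow0 : ∀ j, D 0 j = (Pi.single (Fin.last (m+1)) 1 : Fin (m+2) → R) j := by
    intro j
    rw [hD, congrFun (Matrix.updateRow_ne h0L) j]
    exact congrFun Matrix.updateRow_self j
  have hrowL : ∀ j, D (Fin.last (m+1)) j = (Pi.single 0 1 : Fin (m+2) → R) j := by
    intro j
    rw [hD]
    exact congrFun Matrix.updateRow_self j
  rw [Matrix.det_succ_row_zero, Finset.sum_eq_single (Fin.last (m+1))]
  · rw [hrow0, Pi.single_eq_same, Fin.succAbove_last]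
    have hS : ((D.submatrix Fin.succ Fin.castSucc).det) = (-1)^m * cont m (fun i => a (i+1)) := by
      rw [Matrix.det_succ_row _ (Fin.last m), Finset.sum_eq_single (0 : Fin (m+1))]
      · have hv : (D.submatrix Fin.succ Fin.castSucc) (Fin.last m) (0 : Fin (m+1)) = 1 := by
          rw [Matrix.submatrix_apply, Fin.succ_last, hrowL]
          rw [show ((0 : Fin (m+1)).castSucc) = (0 : Fin (m+2)) by rfl, Pi.single_eq_same]
        rw [hv, Fin.succAbove_last, Fin.succAbove_zero, Matrix.submatrix_submatrix]
        have hTm : D.submatrix (Fin.succ ∘ Fin.castSucc) (Fin.castSucc ∘ Fin.succ) =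
            triMat m (fun i => a (i+1)) := by
          ext i j
          have hne1 : (Fin.castSucc i).succ ≠ Fin.last (m+1) := by
            have hi := i.isLt
            apply Fin.ne_of_val_ne
            simp only [Fin.val_succ, Fin.coe_castSucc, Fin.val_last]
            omega
          have hne2 : (Fin.castSucc i).succ ≠ 0 := Fin.succ_ne_zero _
          simp only [Matrix.submatrix_apply, Function.comp]
          rw [hD, congrFun (Matrix.updateRow_ne hne1) _, congrFun (Matrix.updateRow_ne hne2) _]
          simp only [triMat, Fin.val_succ, Fin.coe_castSucc]
          split_ifs <;> first | rfl | (exfalso; omega)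
        rw [hTm]
        have hc : (triMat m (fun i => a (i+1))).det = cont m (fun i => a (i+1)) := rfl
        rw [hc]
        simp
      · intro b _ hb
        have hz : (D.submatrix Fin.succ Fin.castSucc) (Fin.last m) b = 0 := by
          rw [Matrix.submatrix_apply, Fin.succ_last, hrowL]
          exact Pi.single_eq_of_ne (fun h => hb (Fin.ext (by have := congrArg Fin.val h; simp only [Fin.coe_castSucc, Fin.val_zero] at this ⊢; exact this))) _
        rw [hz]
        ring
      · simp
    rw [hS]
    have hpow : ((-1:R))^(m+1) * (-1)^m = -1 := by
      rw [← pow_add]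
      have h2 : m + 1 + m = 2*m + 1 := by omega
      rw [h2]
      exact Odd.neg_one_pow ⟨m, by ring⟩
    simp only [Fin.val_last]
    linear_combination (cont m fun i => a (i+1)) * hpow
  · intro b _ hb
    rw [hrow0, Pi.single_eq_of_ne hb]
    ring
  · simp

lemma det_triMat_add_corner (m : ℕ) (a : ℕ → R) (t : R) :
    (triMat (m+2) a + t • cornerF (m+2)).det =
      cont (m+2) a + 2*t*(-1)^(m+1) - t^2 * cont m (fun i => a (i+1)) := by
  set C := triMat (m+2) a with hC
  set eL : Fin (m+2) → R := Pi.single (Fin.last (m+1)) 1 with heL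
  set e0 : Fin (m+2) → R := Pi.single 0 1 with he0
  set X := C.updateRow (Fin.last (m+1)) (C (Fin.last (m+1)) + t • e0) with hX
  have h0L : (0 : Fin (m+2)) ≠ Fin.last (m+1) := by
    apply Fin.ne_of_val_ne
    simp
  have hF0 : ∀ j : Fin (m+2), cornerF (m+2) 0 j = eL j := by
    intro j
    have hiff : (((0 : Fin (m+2)) : ℕ) = 0 ∧ (j:ℕ) = m+2-1) ∨
        (((0 : Fin (m+2)) : ℕ) = m+2-1 ∧ (j:ℕ) = 0) ↔ j = Fin.last (m+1) := by
      simp only [Fin.val_zero]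
      constructor
      · rintro (⟨-, h⟩ | ⟨h, -⟩)
        · exact Fin.ext (by simp only [Fin.val_last]; omega)
        · omega
      · intro h
        subst h
        exact Or.inl ⟨by trivial, by simp only [Fin.val_last]; omega⟩
    simp only [cornerF, hiff, heL, Pi.single_apply]
  have hFL : ∀ j : Fin (m+2), cornerF (m+2) (Fin.last (m+1)) j = e0 j := by
    intro j
    have hiff : (((Fin.last (m+1) : Fin (m+2)) : ℕ) = 0 ∧ (j:ℕ) = m+2-1) ∨
        (((Fin.last (m+1) : Fin (m+2)) : ℕ) = m+2-1 ∧ (j:ℕ) = 0) ↔ j = 0 := by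
      simp only [Fin.val_last]
      constructor
      · rintro (⟨h, -⟩ | ⟨-, h⟩)
        · omega
        · exact Fin.ext (by simp only [Fin.val_zero]; omega)
      · intro h
        subst h
        exact Or.inr ⟨by omega, by trivial⟩
    simp only [cornerF, hiff, he0, Pi.single_apply]
  have hFmid : ∀ i j : Fin (m+2), i ≠ 0 → i ≠ Fin.last (m+1) → (cornerF (m+2) : Matrix (Fin (m+2)) (Fin (m+2)) R) i j = 0 := by
    intro i j hi0 hiL
    have h1 : (i:ℕ) ≠ 0 := fun h => hi0 (Fin.ext (by simp [h]))
    have h2 : (i:ℕ) ≠ m + 1 := fun h => hiL (Fin.ext (by simp [h]))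
    have hiff : (((i : Fin (m+2)) : ℕ) = 0 ∧ (j:ℕ) = m+2-1) ∨
        (((i : Fin (m+2)) : ℕ) = m+2-1 ∧ (j:ℕ) = 0) ↔ False := by
      constructor
      · rintro (⟨h, -⟩ | ⟨h, -⟩) <;> omega
      · exact False.elim
    simp only [cornerF]
    split_ifs with h
    · exact absurd h (by omega)
    · rfl
  have hM : C + t • cornerF (m+2) = X.updateRow 0 (C 0 + t • eL) := by
    ext i j
    by_cases hi0 : i = 0
    · subst hi0
      rw [Matrix.updateRow_self]
      simp only [Matrix.add_apply, Matrix.smul_apply, Pi.add_apply, Pi.smul_apply,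
        smul_eq_mul, hF0 j]
    · rw [congrFun (Matrix.updateRow_ne hi0) j, hX]
      by_cases hiL : i = Fin.last (m+1)
      · subst hiL
        rw [Matrix.updateRow_self]
        simp only [Matrix.add_apply, Matrix.smul_apply, Pi.add_apply, Pi.smul_apply,
          smul_eq_mul, hFL j]
      · rw [congrFun (Matrix.updateRow_ne hiL) j]
        simp only [Matrix.add_apply, Matrix.smul_apply, smul_eq_mul, hFmid i j hi0 hiL]
        ring
  have hX0 : X 0 = C 0 := Matrix.updateRow_ne h0L
  have h1 : (X.updateRow 0 (C 0)).det = C.det + t * (-1)^(m+1) := by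
    rw [← hX0, Matrix.updateRow_eq_self, hX, Matrix.det_updateRow_add,
      Matrix.updateRow_eq_self, Matrix.det_updateRow_smul, he0, detE3 m a]
  have hY : X.updateRow 0 eL =
      (C.updateRow 0 eL).updateRow (Fin.last (m+1)) (C (Fin.last (m+1)) + t • e0) := by
    ext i j
    by_cases hi0 : i = 0
    · subst hi0
      rw [Matrix.updateRow_self, congrFun (Matrix.updateRow_ne h0L) j, Matrix.updateRow_self]
    · rw [congrFun (Matrix.updateRow_ne hi0) j, hX]
      by_cases hiL : i = Fin.last (m+1)
      · subst hiL
        rw [Matrix.updateRow_self, Matrix.updateRow_self]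
      · rw [congrFun (Matrix.updateRow_ne hiL) j, congrFun (Matrix.updateRow_ne hiL) j,
          congrFun (Matrix.updateRow_ne hi0) j]
  have h2 : (X.updateRow 0 (t • eL)).det =
      t * ((-1)^(m+1) + t * (- cont m (fun i => a (i+1)))) := by
    rw [Matrix.det_updateRow_smul]
    congr 1
    have hCe : (C.updateRow 0 eL) (Fin.last (m+1)) = C (Fin.last (m+1)) :=
      Matrix.updateRow_ne h0L.symm
    rw [hY, Matrix.det_updateRow_add, ← hCe, Matrix.updateRow_eq_self,
      Matrix.det_updateRow_smul, heL, he0, detE2 m a, detE4 m a]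
  rw [hM, Matrix.det_updateRow_add, h1, h2]
  have hcd : C.det = cont (m+2) a := rfl
  rw [hcd]
  ring

theorem rotundus_symmetric_det (n : ℕ) (hn : 2 ≤ n) (a : ℕ → R) :
    (Matrix.fromBlocks (cornerF n) (triMat n a) (triMat n a) (cornerF n)).det =
      (-1) ^ n * ((rotundus n a) ^ 2 - 4) := by
  obtain ⟨m, rfl⟩ : ∃ m, n = m + 2 := ⟨n - 2, by omega⟩
  rw [det_fromBlocks_comm]
  have hplus : cornerF (m+2) + triMat (m+2) a = triMat (m+2) a + (1:R) • cornerF (m+2) := by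
    rw [one_smul]
    exact add_comm _ _
  have hminus : cornerF (m+2) - triMat (m+2) a = -(triMat (m+2) a + (-1:R) • cornerF (m+2)) := by
    rw [neg_add, neg_smul, one_smul, neg_neg]
    abel
  rw [hplus, hminus, Matrix.det_neg, det_triMat_add_corner, det_triMat_add_corner]
  have hrot : rotundus (m+2) a = cont (m+2) a - cont m (fun i => a (i+1)) := rfl
  rw [hrot]
  have hcard : Fintype.card (Fin (m+2)) = m + 2 := Fintype.card_fin _
  rw [hcard]
  have hx : ((-1:R))^m * (-1)^m = 1 := by
    rw [← pow_add, ← two_mul, pow_mul]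
    norm_num
  simp only [pow_succ]
  linear_combination (-4 * (-1:R)^m) * hx
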